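/- For every d ≥ 0 the following closed forms hold: (i) with ψ⁰_{0,1}(t) = (1/√2)(2t e^{t} 1_{(−∞,0)}(t) + e^{−|t|}) and ψ⁰_{1,1}(t) = −(1/√2)(2t e^{−t} 1_{[0,∞)}(t) + e^{−|t|}), one has ψ⁰_{0,1}(0)ψ⁰_{0,1}(d) + ψ⁰_{1,1}(0)ψ⁰_{1,1}(d) = (1+d)e^{−d}; (ii) with ψ⁰_{0,2}(t) = (2/√(4!))(2(−t²+t)e^{t} 1_{(−∞,0)}(t) − e^{−|t|}), ψ⁰_{1,2}(t) = (4/√(4!))(|t|+1)e^{−|t|}, and ψ⁰_{2,2}(t) = (2/√(4!))(−2(t²+t)e^{−t} 1_{[0,∞)}(t) − e^{−|t|}), one has ∑_{m=0}^{2} ψ⁰_{m,2}(0)ψ⁰_{m,2}(d) = (1 + d + d²/3)e^{−d}. -/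

import Mathlib

open Real Finset

/-- Null-space function `ψ⁰_{0,1}` of the Matérn-3/2 kernel. -/
noncomputable def psi01 (t : ℝ) : ℝ :=
  (1 / Real.sqrt 2) *
    (Set.indicator (Set.Iio (0 : ℝ)) (fun s => 2 * s * Real.exp s) t + Real.exp (-|t|))

/-- Null-space function `ψ⁰_{1,1}` of the Matérn-3/2 kernel. -/
noncomputable def psi11 (t : ℝ) : ℝ :=
  -(1 / Real.sqrt 2) *
    (Set.indicator (Set.Ici (0 : ℝ)) (fun s => 2 * s * Real.exp (-s)) t + Real.exp (-|t|))

/-- Null-space function `ψ⁰_{0,2}` of the Matérn-5/2 kernel. -/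
noncomputable def psi02 (t : ℝ) : ℝ :=
  (2 / Real.sqrt (Nat.factorial 4)) *
    (Set.indicator (Set.Iio (0 : ℝ)) (fun s => 2 * (-s ^ 2 + s) * Real.exp s) t - Real.exp (-|t|))

/-- Null-space function `ψ⁰_{1,2}` of the Matérn-5/2 kernel. -/
noncomputable def psi12 (t : ℝ) : ℝ :=
  (4 / Real.sqrt (Nat.factorial 4)) * (|t| + 1) * Real.exp (-|t|)

/-- Null-space function `ψ⁰_{2,2}` of the Matérn-5/2 kernel. -/
noncomputable def psi22 (t : ℝ) : ℝ :=
  (2 / Real.sqrt (Nat.factorial 4)) *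
    (Set.indicator (Set.Ici (0 : ℝ)) (fun s => -(2 * (s ^ 2 + s)) * Real.exp (-s)) t -
      Real.exp (-|t|))

/-- Closed forms of the Matérn-3/2 and Matérn-5/2 kernels from their null-space functions. -/
theorem matern_nullspace_closed_forms (d : ℝ) (hd : 0 ≤ d) :
    (psi01 0 * psi01 d + psi11 0 * psi11 d = (1 + d) * Real.exp (-d)) ∧
    (psi02 0 * psi02 d + psi12 0 * psi12 d + psi22 0 * psi22 d =
      (1 + d + d ^ 2 / 3) * Real.exp (-d)) := by
  have h0 : (0:ℝ) ∉ Set.Iio (0:ℝ) := by simp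
  have hd' : d ∉ Set.Iio (0:ℝ) := by simpa using hd
  have h0' : (0:ℝ) ∈ Set.Ici (0:ℝ) := Set.self_mem_Ici
  have hdi : d ∈ Set.Ici (0:ℝ) := hd
  have habs : |d| = d := abs_of_nonneg hd
  have h2 : Real.sqrt 2 * Real.sqrt 2 = 2 := Real.mul_self_sqrt (by norm_num)
  have h24 : Real.sqrt (Nat.factorial 4) * Real.sqrt (Nat.factorial 4) = 24 := by
    rw [Real.mul_self_sqrt (by positivity)]; norm_num [Nat.factorial]
  have h2ne : Real.sqrt 2 ≠ 0 := by positivity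
  have h24ne : Real.sqrt (Nat.factorial 4) ≠ 0 := by positivity
  unfold psi01 psi11 psi02 psi12 psi22
  rw [Set.indicator_of_notMem h0, Set.indicator_of_notMem hd',
    Set.indicator_of_mem h0' , Set.indicator_of_mem hdi, Set.indicator_of_notMem h0,
    Set.indicator_of_notMem hd', Set.indicator_of_mem h0', Set.indicator_of_mem hdi]
  simp only [habs, abs_zero, neg_zero, Real.exp_zero]
  constructor
  · field_simp
    ring_nf
    norm_num
  · field_simp
    ring_nf
    norm_num [Nat.factorial]
    ring
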